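/- If μ ◁ ν and ν ◁ μ in the strict intersection type system, then μ ∼ ν. -/

import Mathlib

/-- Terms of the λ⊥-calculus (de Bruijn indices). -/
inductive Tm : Type
  | var : ℕ → Tm
  | bot : Tm
  | lam : Tm → Tm
  | app : Tm → Tm → Tm
  deriving DecidableEq

namespace Tm

/-- Lift (shift by one) all de Bruijn indices ≥ k. -/
def lift : Tm → ℕ → Tm
  | var n, k => if n < k then var n else var (n+1)
  | bot, _ => bot
  | lam M, k => lam (lift M (k+1))
  | app M N, k => app (lift M k) (lift N k)

/-- Capture-avoiding substitution of N for variable k. -/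
def subst : Tm → ℕ → Tm → Tm
  | var n, k, N => if n < k then var n else if n = k then N else var (n-1)
  | bot, _, _ => bot
  | lam M, k, N => lam (subst M (k+1) (lift N 0))
  | app M P, k, N => app (subst M k N) (subst P k N)

/-- One-step β⊥-reduction (compatible closure). -/
inductive Step : Tm → Tm → Prop
  | beta (M N : Tm) : Step (app (lam M) N) (subst M 0 N)
  | botApp (N : Tm) : Step (app bot N) bot
  | botLam : Step (lam bot) bot
  | appL {M M'} (N) : Step M M' → Step (app M N) (app M' N)
  | appR (M) {N N'} : Step N N' → Step (app M N) (app M N')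
  | lamC {M M'} : Step M M' → Step (lam M) (lam M')

/-- Multi-step reduction. -/
def Red : Tm → Tm → Prop := Relation.ReflTransGen Step

/-- β⊥-conversion: M = N iff they have a common reduct. -/
def Conv (M N : Tm) : Prop := ∃ P, Red M P ∧ Red N P

/-- The identity combinator I = λx.x. -/
def iTm : Tm := lam (var 0)

/-- Composition M ∘ N = λz.M(Nz). -/
def comp (M N : Tm) : Tm := lam (app (lift M 0) (app (lift N 0) (var 0)))

/-- Apply M to a list of arguments. -/
def applist (M : Tm) (Ms : List Tm) : Tm := Ms.foldl app M

/-- Iterated λ-abstraction. -/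
def iterLam : ℕ → Tm → Tm
  | 0, M => M
  | n+1, M => lam (iterLam n M)

/-- The selector λt x₁ … xₘ. t  (a simple right inverse). -/
def sel (m : ℕ) : Tm := iterLam (m+1) (var m)

/-- Number of initial λ-abstractions of a term. -/
def leadLams : Tm → ℕ
  | lam M => leadLams M + 1
  | _ => 0

end Tm

mutual
/-- Strict intersection types μ ::= φ | ω | σ → μ. -/
inductive STy : Type
  | tvar : ℕ → STy
  | omega : STy
  | arrow : ITy → STy → STy
/-- Intersections σ ::= μ | σ ∧ σ. -/
inductive ITy : Type
  | strict : STy → ITy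
  | inter : ITy → ITy → ITy
end

/-- The subtyping preorder on (strict) intersection types. -/
inductive SubTy : ITy → ITy → Prop
  | refl (σ) : SubTy σ σ
  | trans {σ τ ρ} : SubTy σ τ → SubTy τ ρ → SubTy σ ρ
  | toOmega (σ) : SubTy σ (.strict .omega)
  | omegaArr : SubTy (.strict .omega) (.strict (.arrow (.strict .omega) .omega))
  | interL (σ τ) : SubTy (.inter σ τ) σ
  | interR (σ τ) : SubTy (.inter σ τ) τ
  | interMono {σ₁ σ₂ τ₁ τ₂} : SubTy σ₁ τ₁ → SubTy σ₂ τ₂ → SubTy (.inter σ₁ σ₂) (.inter τ₁ τ₂)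
  | arrow {σ τ : ITy} {μ ν : STy} : SubTy τ σ → SubTy (.strict μ) (.strict ν) →
      SubTy (.strict (.arrow σ μ)) (.strict (.arrow τ ν))

/-- σ ∼ τ : mutual subtyping. -/
def EqvTy (σ τ : ITy) : Prop := SubTy σ τ ∧ SubTy τ σ

/-- μ is a conjunct (component) of the intersection σ. -/
inductive IsComp : STy → ITy → Prop
  | strict (μ) : IsComp μ (.strict μ)
  | left {μ σ} (τ) : IsComp μ σ → IsComp μ (.inter σ τ)
  | right {μ τ} (σ) : IsComp μ τ → IsComp μ (.inter σ τ)

/-- The essential intersection type assignment system (contexts are de Bruijn lists). -/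
inductive Der : List ITy → Tm → STy → Prop
  | var {Γ n σ μ} : Γ[n]? = some σ → IsComp μ σ → Der Γ (.var n) μ
  | omega (Γ M) : Der Γ M .omega
  | sub {Γ M μ ν} : Der Γ M μ → SubTy (.strict μ) (.strict ν) → Der Γ M ν
  | lam {Γ M σ μ} : Der (σ :: Γ) M μ → Der Γ (.lam M) (.arrow σ μ)
  | app {Γ M N σ μ} : Der Γ M (.arrow σ μ) → (∀ ν, IsComp ν σ → Der Γ N ν) →
      Der Γ (.app M N) μ

/-- A strict type is inhabited if some closed term has it. -/
def InhabS (μ : STy) : Prop := ∃ M, Der [] M μ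

/-- An intersection is inhabited if a single closed term has all its conjuncts. -/
def InhabI (σ : ITy) : Prop := ∃ M, ∀ μ, IsComp μ σ → Der [] M μ

/-- σ → ρ is inhabited: one term inhabits σ → μ for every conjunct μ of ρ. -/
def InhabArrow (σ ρ : ITy) : Prop := ∃ M, ∀ μ, IsComp μ ρ → Der [] M (.arrow σ μ)

/-- ρ₁ → … → ρₘ → μ. -/
def arrows (l : List ITy) (μ : STy) : STy := l.foldr .arrow μ

/-- μ ◁ ν : μ is a retract of ν. -/
def Retract (μ ν : STy) : Prop :=
  ∃ L R, Der [] L (.arrow (.strict ν) μ) ∧ Der [] R (.arrow (.strict μ) ν) ∧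
    Tm.Conv (Tm.comp L R) Tm.iTm

namespace Tm

theorem lift_lift (M : Tm) : ∀ i j, i ≤ j → lift (lift M i) (j+1) = lift (lift M j) i := by
  induction M with
  | var n =>
    intro i j h
    simp only [lift]
    split_ifs <;> simp only [lift] <;> split_ifs <;> first | rfl | omega
  | bot => intros; rfl
  | lam M ih =>
    intro i j h
    simp only [lift]
    rw [ih (i+1) (j+1) (by omega)]
  | app M N ihM ihN =>
    intro i j h
    simp only [lift, ihM i j h, ihN i j h]

theorem subst_lift (M : Tm) : ∀ k N, subst (lift M k) k N = M := by
  induction M with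
  | var n =>
    intro k N
    simp only [lift]
    split_ifs <;> simp only [subst] <;> split_ifs <;> first | rfl | omega | (congr 1; omega)
  | bot => intros; rfl
  | lam M ih => intro k N; simp only [lift, subst, ih]
  | app M N ihM ihN => intro k N; simp only [lift, subst, ihM, ihN]

theorem lift_subst (M : Tm) : ∀ i j N, i ≤ j →
    lift (subst M j N) i = subst (lift M i) (j+1) (lift N i) := by
  induction M with
  | var n =>
    intro i j N h
    simp only [subst, lift]
    split_ifs <;> simp only [subst, lift] <;> split_ifs <;>
      first | rfl | omega | (congr 1; omega)
  | bot => intros; rfl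
  | lam M ih =>
    intro i j N h
    simp only [subst, lift]
    rw [ih (i+1) (j+1) _ (by omega), lift_lift N 0 i (by omega)]
  | app M P ihM ihP =>
    intro i j N h
    simp only [subst, lift, ihM i j N h, ihP i j N h]

theorem subst_subst (M : Tm) : ∀ i j N P, i ≤ j →
    subst (subst M i N) j P = subst (subst M (j+1) (lift P i)) i (subst N j P) := by
  induction M with
  | var n =>
    intro i j N P h
    by_cases h1 : n < i
    · rw [show subst (var n) i N = var n by simp only [subst, if_pos h1],
        show subst (var n) (j+1) (lift P i) = var n by
          simp only [subst, if_pos (show n < j+1 by omega)]]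
      simp only [subst, if_pos (show n < j by omega), if_pos h1]
    · by_cases h2 : n = i
      · rw [show subst (var n) i N = N by simp only [subst, if_neg h1, if_pos h2],
          show subst (var n) (j+1) (lift P i) = var n by
            simp only [subst, if_pos (show n < j+1 by omega)]]
        simp only [subst, if_neg h1, if_pos h2]
      · by_cases h3 : n ≤ j
        · rw [show subst (var n) i N = var (n-1) by simp only [subst, if_neg h1, if_neg h2],
            show subst (var n) (j+1) (lift P i) = var n by
              simp only [subst, if_pos (show n < j+1 by omega)]]
          simp only [subst, if_pos (show n-1 < j by omega), if_neg h1, if_neg h2]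
        · by_cases h4 : n = j+1
          · rw [show subst (var n) i N = var (n-1) by simp only [subst, if_neg h1, if_neg h2],
              show subst (var n) (j+1) (lift P i) = lift P i by
                simp only [subst, if_neg (show ¬ n < j+1 by omega), if_pos h4]]
            rw [subst_lift]
            simp only [subst, if_neg (show ¬ n-1 < j by omega), if_pos (show n-1 = j by omega)]
          · rw [show subst (var n) i N = var (n-1) by simp only [subst, if_neg h1, if_neg h2],
              show subst (var n) (j+1) (lift P i) = var (n-1) by
                simp only [subst, if_neg (show ¬ n < j+1 by omega), if_neg h4]]
            simp only [subst, if_neg (show ¬ n-1 < j by omega),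
              if_neg (show ¬ n-1 = j by omega), if_neg (show ¬ n-1 < i by omega),
              if_neg (show ¬ n-1 = i by omega)]
  | bot => intros; rfl
  | lam M ih =>
    intro i j N P h
    simp only [subst]
    rw [ih (i+1) (j+1) _ _ (by omega), lift_lift P 0 i (by omega),
      lift_subst N 0 j P (by omega)]
  | app M Q ihM ihQ =>
    intro i j N P h
    simp only [subst, ihM i j N P h, ihQ i j N P h]

theorem lift_subst_ge (M : Tm) : ∀ j k N, j ≤ k →
    lift (subst M j N) k = subst (lift M (k+1)) j (lift N k) := by
  induction M with
  | var n =>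
    intro j k N h
    simp only [subst, lift]
    split_ifs <;> simp only [subst, lift] <;> split_ifs <;>
      first | rfl | omega | (congr 1; omega)
  | bot => intros; rfl
  | lam M ih =>
    intro j k N h
    simp only [subst, lift]
    rw [ih (j+1) (k+1) _ (by omega), lift_lift N 0 k (by omega)]
  | app M P ihM ihP =>
    intro j k N h
    simp only [subst, lift, ihM j k N h, ihP j k N h]

end Tm
namespace Tm

/-! ### Free-variable bookkeeping -/

def NotFree : ℕ → Tm → Prop
  | j, var n => n ≠ j
  | _, bot => True
  | j, lam M => NotFree (j+1) M
  | j, app M N => NotFree j M ∧ NotFree j N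

theorem notFree_lift_self : ∀ (M : Tm) (k : ℕ), NotFree k (lift M k) := by
  intro M
  induction M with
  | var n => intro k; simp only [lift]; split_ifs <;> simp only [NotFree] <;> omega
  | bot => intro k; trivial
  | lam M ih => intro k; exact ih (k+1)
  | app M N ihM ihN => intro k; exact ⟨ihM k, ihN k⟩

theorem notFree_lift_succ : ∀ (M : Tm) (j k : ℕ), k ≤ j → NotFree j M →
    NotFree (j+1) (lift M k) := by
  intro M
  induction M with
  | var n => intro j k hk h; simp only [lift]; split_ifs <;> simp only [NotFree] at * <;> omega
  | bot => intros; trivial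
  | lam M ih => intro j k hk h; exact ih (j+1) (k+1) (by omega) h
  | app M N ihM ihN => intro j k hk h; exact ⟨ihM j k hk h.1, ihN j k hk h.2⟩

theorem notFree_subst : ∀ (M A : Tm) (i j : ℕ), i ≤ j → NotFree (j+1) M → NotFree j A →
    NotFree j (subst M i A) := by
  intro M
  induction M with
  | var n =>
    intro A i j hij hM hA
    simp only [subst]
    split_ifs <;> simp only [NotFree] at * <;> first | omega | exact hA
  | bot => intros; trivial
  | lam M ih =>
    intro A i j hij hM hA
    exact ih (lift A 0) (i+1) (j+1) (by omega) hM (notFree_lift_succ A j 0 (by omega) hA)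
  | app M N ihM ihN =>
    intro A i j hij hM hA
    exact ⟨ihM A i j hij hM.1 hA, ihN A i j hij hM.2 hA⟩

/-! ### Basic reduction lemmas -/

theorem Red.refl' {M : Tm} : Red M M := Relation.ReflTransGen.refl

theorem Red.of_step {M N : Tm} (h : Step M N) : Red M N := Relation.ReflTransGen.single h

theorem Red.trans' {M N P : Tm} (h1 : Red M N) (h2 : Red N P) : Red M P :=
  Relation.ReflTransGen.trans h1 h2

theorem red_appL {M M'} (N : Tm) (h : Red M M') : Red (app M N) (app M' N) :=
  Relation.ReflTransGen.lift (fun X => app X N) (fun _ _ hs => Step.appL N hs) _ _ h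

theorem red_appR (M : Tm) {N N'} (h : Red N N') : Red (app M N) (app M N') :=
  Relation.ReflTransGen.lift (fun X => app M X) (fun _ _ hs => Step.appR M hs) _ _ h

theorem red_lam {M M'} (h : Red M M') : Red (lam M) (lam M') :=
  Relation.ReflTransGen.lift lam (fun _ _ hs => Step.lamC hs) _ _ h

theorem red_app {M M' N N'} (h1 : Red M M') (h2 : Red N N') :
    Red (app M N) (app M' N') := (red_appL N h1).trans' (red_appR M' h2)

theorem step_subst {M M'} (h : Step M M') : ∀ (k : ℕ) (N : Tm),
    Step (subst M k N) (subst M' k N) := by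
  induction h with
  | beta P Q =>
    intro k N
    rw [subst_subst P 0 k Q N (by omega)]
    exact Step.beta _ _
  | botApp Q => intro k N; exact Step.botApp _
  | botLam => intro k N; exact Step.botLam
  | appL Q h ih => intro k N; exact Step.appL _ (ih k N)
  | appR P h ih => intro k N; exact Step.appR _ (ih k N)
  | lamC h ih => intro k N; exact Step.lamC (ih (k+1) (lift N 0))

theorem red_subst {M M'} (h : Red M M') (k : ℕ) (N : Tm) :
    Red (subst M k N) (subst M' k N) :=
  Relation.ReflTransGen.lift (fun X => subst X k N) (fun _ _ hs => step_subst hs k N) _ _ h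

theorem bot_no_step {Z : Tm} (h : Step bot Z) : False := by cases h

theorem var_no_step {n : ℕ} {Z : Tm} (h : Step (var n) Z) : False := by cases h

theorem red_bot_eq {Z : Tm} (h : Red bot Z) : Z = bot := by
  induction h with
  | refl => rfl
  | tail _ hs ih => subst ih; exact absurd hs bot_no_step

theorem red_var_eq {n : ℕ} {Z : Tm} (h : Red (var n) Z) : Z = var n := by
  induction h with
  | refl => rfl
  | tail _ hs ih => subst ih; exact absurd hs var_no_step

theorem red_lam_inv {M C : Tm} (h : Red (lam M) C) :
    (∃ M', C = lam M' ∧ Red M M') ∨ C = bot := by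
  induction h with
  | refl => exact Or.inl ⟨M, rfl, Red.refl'⟩
  | tail _ hs ih =>
    rcases ih with ⟨M', rfl, hM⟩ | rfl
    · cases hs with
      | botLam => exact Or.inr rfl
      | lamC h => exact Or.inl ⟨_, rfl, hM.trans' (Red.of_step h)⟩
    · exact absurd hs bot_no_step

theorem red_lam_var {M : Tm} {j : ℕ} (h : Red (lam M) (var j)) : False := by
  rcases red_lam_inv h with ⟨M', hM, _⟩ | hM <;> simp at hM

/-- Var-headed applicative term with head `n` and `k` arguments. -/
inductive VarHead : ℕ → ℕ → Tm → Prop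
  | var (n) : VarHead n 0 (var n)
  | app {n k M} (N) : VarHead n k M → VarHead n (k+1) (app M N)

theorem varHead_step {n k M M'} (h : VarHead n k M) (hs : Step M M') : VarHead n k M' := by
  induction h generalizing M' with
  | var => exact absurd hs var_no_step
  | app N h ih =>
    cases hs with
    | beta P Q => cases h
    | botApp Q => cases h
    | appL _ hs => exact VarHead.app _ (ih hs)
    | appR _ hs => exact VarHead.app _ h

theorem varHead_red {n k M M'} (h : VarHead n k M) (hs : Red M M') : VarHead n k M' := by
  induction hs with
  | refl => exact h
  | tail _ hs ih => exact varHead_step ih hs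

theorem iTm_no_step {Z : Tm} (h : Step iTm Z) : False := by
  cases h with
  | lamC h => exact var_no_step h

theorem red_iTm_eq {Z : Tm} (h : Red iTm Z) : Z = iTm := by
  induction h with
  | refl => rfl
  | tail _ hs ih => subst ih; exact absurd hs iTm_no_step

end Tm
namespace Tm

/-! ### Parallel reduction and confluence -/

inductive Par : Tm → Tm → Prop
  | var (n) : Par (var n) (var n)
  | bot : Par bot bot
  | lam {M M'} : Par M M' → Par (lam M) (lam M')
  | app {M M' N N'} : Par M M' → Par N N' → Par (app M N) (app M' N')
  | beta {M M' N N'} : Par M M' → Par N N' → Par (app (lam M) N) (subst M' 0 N')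
  | botApp (N) : Par (app bot N) bot
  | botLam : Par (lam bot) bot

theorem par_refl (M : Tm) : Par M M := by
  induction M with
  | var n => exact Par.var n
  | bot => exact Par.bot
  | lam M ih => exact Par.lam ih
  | app M N ihM ihN => exact Par.app ihM ihN

theorem step_par {M N : Tm} (h : Step M N) : Par M N := by
  induction h with
  | beta M N => exact Par.beta (par_refl M) (par_refl N)
  | botApp N => exact Par.botApp N
  | botLam => exact Par.botLam
  | appL N _ ih => exact Par.app ih (par_refl N)
  | appR M _ ih => exact Par.app (par_refl M) ih
  | lamC _ ih => exact Par.lam ih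

theorem par_red {M N : Tm} (h : Par M N) : Red M N := by
  induction h with
  | var n => exact Red.refl'
  | bot => exact Red.refl'
  | lam _ ih => exact red_lam ih
  | app _ _ ihM ihN => exact red_app ihM ihN
  | beta _ _ ihM ihN =>
    exact (red_app (red_lam ihM) ihN).trans' (Red.of_step (Step.beta _ _))
  | botApp N => exact Red.of_step (Step.botApp N)
  | botLam => exact Red.of_step Step.botLam

theorem par_lift {M M'} (h : Par M M') : ∀ k, Par (lift M k) (lift M' k) := by
  induction h with
  | var n => intro k; exact par_refl _
  | bot => intro k; exact Par.bot
  | lam _ ih => intro k; exact Par.lam (ih (k+1))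
  | app _ _ ihM ihN => intro k; exact Par.app (ihM k) (ihN k)
  | beta _ _ ihM ihN =>
    intro k
    have := Par.beta (ihM (k+1)) (ihN k)
    rwa [← lift_subst_ge _ 0 k _ (by omega)] at this
  | botApp N => intro k; exact Par.botApp _
  | botLam => intro k; exact Par.botLam

theorem par_subst {M M'} (hM : Par M M') : ∀ {N N'} (_ : Par N N') (k : ℕ),
    Par (subst M k N) (subst M' k N') := by
  induction hM with
  | var n =>
    intro N N' hN k
    simp only [subst]
    split_ifs <;> first | exact par_refl _ | exact hN
  | bot => intros; exact Par.bot
  | lam _ ih => intro N N' hN k; exact Par.lam (ih (par_lift hN 0) (k+1))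
  | app _ _ ihM ihN => intro N N' hN k; exact Par.app (ihM hN k) (ihN hN k)
  | beta hP hQ ihP ihQ =>
    intro N N' hN k
    have := Par.beta (ihP (par_lift hN 0) (k+1)) (ihQ hN k)
    rwa [← subst_subst _ 0 k _ _ (by omega)] at this
  | botApp Q => intros; exact Par.botApp _
  | botLam => intros; exact Par.botLam

theorem par_bot_inv {X : Tm} (h : Par bot X) : X = bot := by cases h; rfl

theorem par_lam_inv {A C : Tm} (h : Par (lam A) C) :
    (∃ B, C = lam B ∧ Par A B) ∨ (A = bot ∧ C = bot) := by
  cases h with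
  | lam h => exact Or.inl ⟨_, rfl, h⟩
  | botLam => exact Or.inr ⟨rfl, rfl⟩

/-- Complete development. -/
def cd : Tm → Tm
  | var n => var n
  | bot => bot
  | lam bot => bot
  | lam (var n) => lam (var n)
  | lam (lam M) => lam (cd (lam M))
  | lam (app M N) => lam (cd (app M N))
  | app (lam P) N => subst (cd P) 0 (cd N)
  | app bot _ => bot
  | app (var n) N => app (var n) (cd N)
  | app (app P Q) N => app (cd (app P Q)) (cd N)

theorem par_triangle {M N : Tm} (h : Par M N) : Par N (cd M) := by
  induction h with
  | var n => exact Par.var n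
  | bot => exact Par.bot
  | @lam A A' h ih =>
    cases A with
    | bot => rw [par_bot_inv h]; exact Par.botLam
    | var n => cases h; exact par_refl _
    | lam P => exact Par.lam ih
    | app P Q => exact Par.lam ih
  | @app A A' B B' hM hN ihM ihN =>
    cases A with
    | bot => rw [par_bot_inv hM]; exact Par.botApp _
    | var n => cases hM; exact Par.app (par_refl _) ihN
    | lam P =>
      rcases par_lam_inv hM with ⟨C, rfl, hC⟩ | ⟨rfl, rfl⟩
      · show Par _ (subst (cd P) 0 (cd B))
        cases P with
        | bot => rw [par_bot_inv hC]; exact Par.beta Par.bot ihN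
        | var n => cases hC; exact Par.beta (par_refl _) ihN
        | lam P₁ =>
          cases ihM with
          | lam h => exact Par.beta h ihN
        | app P₁ P₂ =>
          cases ihM with
          | lam h => exact Par.beta h ihN
      · exact Par.botApp _
    | app P Q => exact Par.app ihM ihN
  | beta hP hQ ihP ihQ => exact par_subst ihP ihQ 0
  | botApp N => exact Par.bot
  | botLam => exact Par.bot

theorem par_diamond {M N₁ N₂ : Tm} (h1 : Par M N₁) (h2 : Par M N₂) :
    ∃ P, Par N₁ P ∧ Par N₂ P := ⟨cd M, par_triangle h1, par_triangle h2⟩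

def ParStar : Tm → Tm → Prop := Relation.ReflTransGen Par

theorem red_parStar {M N} (h : Red M N) : ParStar M N :=
  Relation.ReflTransGen.mono (fun _ _ => step_par) _ _ h

theorem parStar_red {M N} (h : ParStar M N) : Red M N := by
  induction h with
  | refl => exact Red.refl'
  | tail _ hp ih => exact ih.trans' (par_red hp)

theorem parStar_strip {a b c : Tm} (hab : ParStar a b) (hac : Par a c) :
    ∃ d, Par b d ∧ ParStar c d := by
  induction hab with
  | refl => exact ⟨c, hac, Relation.ReflTransGen.refl⟩
  | tail _ hp ih =>
    rcases ih with ⟨d', hd1, hd2⟩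
    rcases par_diamond hp hd1 with ⟨e, he1, he2⟩
    exact ⟨e, he1, hd2.tail he2⟩

theorem parStar_confluent {a b c : Tm} (hab : ParStar a b) (hac : ParStar a c) :
    ∃ d, ParStar b d ∧ ParStar c d := by
  induction hac with
  | refl => exact ⟨b, Relation.ReflTransGen.refl, hab⟩
  | @tail c' c _ hp ih =>
    rcases ih with ⟨d', hd1, hd2⟩
    rcases parStar_strip hd2 hp with ⟨e, he1, he2⟩
    exact ⟨e, hd1.tail he1, he2⟩

theorem red_confluent {a b c : Tm} (hab : Red a b) (hac : Red a c) :
    ∃ d, Red b d ∧ Red c d := by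
  rcases parStar_confluent (red_parStar hab) (red_parStar hac) with ⟨d, h1, h2⟩
  exact ⟨d, parStar_red h1, parStar_red h2⟩

end Tm
namespace Tm

/-! ### Deterministic head reduction -/

inductive Hstep : Tm → Tm → Prop
  | hbeta (M N) : Hstep (app (lam M) N) (subst M 0 N)
  | hbotApp (N) : Hstep (app bot N) bot
  | hbotLam : Hstep (lam bot) bot
  | happL {M M'} (N) : Hstep M M' → (∀ P, M ≠ lam P) → Hstep (app M N) (app M' N)
  | hlamC {M M'} : Hstep M M' → Hstep (lam M) (lam M')

theorem hstep_step {M N : Tm} (h : Hstep M N) : Step M N := by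
  induction h with
  | hbeta M N => exact Step.beta M N
  | hbotApp N => exact Step.botApp N
  | hbotLam => exact Step.botLam
  | happL N _ _ ih => exact Step.appL N ih
  | hlamC _ ih => exact Step.lamC ih

theorem bot_no_hstep {Z : Tm} (h : Hstep bot Z) : False := by cases h

theorem var_no_hstep {n : ℕ} {Z : Tm} (h : Hstep (var n) Z) : False := by cases h

theorem hstep_is_app_or_lam {M M' : Tm} (h : Hstep M M') :
    (∃ A B, M = app A B) ∨ (∃ P, M = lam P) := by
  cases h with
  | hbeta M N => exact Or.inl ⟨_, _, rfl⟩
  | hbotApp N => exact Or.inl ⟨_, _, rfl⟩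
  | hbotLam => exact Or.inr ⟨_, rfl⟩
  | happL N h hc => exact Or.inl ⟨_, _, rfl⟩
  | hlamC h => exact Or.inr ⟨_, rfl⟩

theorem hstep_det {M Z₁ Z₂ : Tm} (h1 : Hstep M Z₁) (h2 : Hstep M Z₂) : Z₁ = Z₂ := by
  induction h1 generalizing Z₂ with
  | hbeta M N =>
    cases h2 with
    | hbeta => rfl
    | happL _ h hc => exact absurd rfl (hc M)
  | hbotApp N =>
    cases h2 with
    | hbotApp => rfl
    | happL _ h hc => exact absurd h bot_no_hstep
  | hbotLam =>
    cases h2 with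
    | hbotLam => rfl
    | hlamC h => exact absurd h bot_no_hstep
  | happL N h hc ih =>
    cases h2 with
    | hbeta P Q => exact absurd rfl (hc P)
    | hbotApp => exact absurd h bot_no_hstep
    | happL _ h' hc' => rw [ih h']
  | hlamC h ih =>
    cases h2 with
    | hbotLam => exact absurd h bot_no_hstep
    | hlamC h' => rw [ih h']

theorem hstep_subst {M M' : Tm} (h : Hstep M M') (k : ℕ) (N : Tm) :
    Hstep (subst M k N) (subst M' k N) := by
  induction h generalizing k N with
  | hbeta P Q =>
    rw [subst_subst P 0 k Q N (by omega)]
    exact Hstep.hbeta _ _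
  | hbotApp Q => exact Hstep.hbotApp _
  | hbotLam => exact Hstep.hbotLam
  | happL Q h hc ih =>
    refine Hstep.happL _ (ih k N) ?_
    rcases hstep_is_app_or_lam h with ⟨A, B, rfl⟩ | ⟨P, rfl⟩
    · intro P hP; simp [subst] at hP
    · exact absurd rfl (hc P)
  | hlamC h ih => exact Hstep.hlamC (ih (k+1) (lift N 0))

/-- Head reduction path with an explicit length. -/
inductive HPathN : ℕ → Tm → Tm → Prop
  | refl (M) : HPathN 0 M M
  | cons {k M N P} : Hstep M N → HPathN k N P → HPathN (k+1) M P

theorem hpath_red {k : ℕ} {M N : Tm} (h : HPathN k M N) : Red M N := by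
  induction h with
  | refl M => exact Red.refl'
  | cons hs _ ih => exact (Red.of_step (hstep_step hs)).trans' ih

theorem hpath_stuck {k : ℕ} {M W : Tm} (h : HPathN k M W)
    (hst : ∀ Z, ¬ Hstep M Z) : k = 0 ∧ W = M := by
  cases h with
  | refl => exact ⟨rfl, rfl⟩
  | cons hs _ => exact absurd hs (hst _)

/-! ### applist and spine lemmas -/

theorem applist_nil (h : Tm) : applist h [] = h := rfl

theorem applist_cons (h a : Tm) (as : List Tm) :
    applist h (a :: as) = applist (app h a) as := rfl

theorem applist_append (h : Tm) (as bs : List Tm) :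
    applist h (as ++ bs) = applist (applist h as) bs := by
  unfold applist
  rw [List.foldl_append]

theorem applist_snoc (h a : Tm) (as : List Tm) :
    applist h (as ++ [a]) = app (applist h as) a := by
  rw [applist_append]
  rfl

theorem subst_applist (h : Tm) (as : List Tm) (k : ℕ) (N : Tm) :
    subst (applist h as) k N = applist (subst h k N) (as.map (fun A => subst A k N)) := by
  induction as generalizing h with
  | nil => rfl
  | cons a as ih => rw [applist_cons, ih, List.map_cons, applist_cons]; rfl

theorem applist_eq_var {h : Tm} {as : List Tm} {m : ℕ} (he : applist h as = var m) :
    h = var m ∧ as = [] := by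
  induction as using List.reverseRecOn with
  | nil => exact ⟨he, rfl⟩
  | append_singleton as a ih => rw [applist_snoc] at he; cases he

theorem notFree_applist {j : ℕ} {h : Tm} {as : List Tm} (hf : NotFree j (applist h as)) :
    NotFree j h ∧ ∀ a ∈ as, NotFree j a := by
  induction as generalizing h with
  | nil => exact ⟨hf, by simp⟩
  | cons a as ih =>
    rw [applist_cons] at hf
    rcases ih hf with ⟨⟨h1, h2⟩, h3⟩
    refine ⟨h1, ?_⟩
    intro b hb
    rcases List.mem_cons.mp hb with rfl | hb
    · exact h2
    · exact h3 b hb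

theorem varHead_applist (n : ℕ) (as : List Tm) {k : ℕ} {M : Tm} (h : VarHead n k M) :
    VarHead n (k + as.length) (applist M as) := by
  induction as generalizing k M with
  | nil => exact h
  | cons a as ih =>
    rw [applist_cons]
    have h2 := ih (VarHead.app a h)
    have e : k + 1 + as.length = k + (a::as).length := by simp; omega
    rwa [e] at h2

theorem vh_no_hstep {n k : ℕ} {M Z : Tm} (h : VarHead n k M) (hs : Hstep M Z) : False := by
  induction h generalizing Z with
  | var => exact var_no_hstep hs
  | app N h ih =>
    cases hs with
    | hbeta P Q => cases h
    | hbotApp => cases h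
    | happL _ hs' _ => exact ih hs'

theorem spine_cases (M : Tm) : ∃ H as, M = applist H as ∧ (∀ A B, H ≠ app A B) := by
  induction M with
  | var n => exact ⟨var n, [], rfl, by intro A B h; cases h⟩
  | bot => exact ⟨bot, [], rfl, by intro A B h; cases h⟩
  | lam M _ => exact ⟨lam M, [], rfl, by intro A B h; cases h⟩
  | app A B ihA _ =>
    rcases ihA with ⟨H, as, rfl, hH⟩
    exact ⟨H, as ++ [B], by rw [applist_snoc], hH⟩

theorem hstep_applist {M M' : Tm} (h : Hstep M M') (happ : ∃ A B, M = app A B)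
    (as : List Tm) : Hstep (applist M as) (applist M' as) := by
  induction as generalizing M M' with
  | nil => exact h
  | cons a as ih =>
    rw [applist_cons, applist_cons]
    refine ih (Hstep.happL a h ?_) ⟨_, _, rfl⟩
    rcases happ with ⟨A, B, rfl⟩
    intro P hP; cases hP

end Tm
namespace Tm

theorem notFree_applist_intro {j : ℕ} {h : Tm} {as : List Tm} (h1 : NotFree j h)
    (h2 : ∀ a ∈ as, NotFree j a) : NotFree j (applist h as) := by
  induction as generalizing h with
  | nil => exact h1
  | cons a as ih =>
    rw [applist_cons]
    exact ih ⟨h1, h2 a (by simp)⟩ (fun b hb => h2 b (by simp [hb]))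

/-- The Böhm-out master lemma: if `M[x:=B]` head reduces to the variable `x`
(where `x = var 0` and `var 1` is not free in `M`), then `M` reduces to
`x A₁ ⋯ A_q` and `B A₁[B] ⋯ A_q[B]` head reduces to `x` within the same path. -/
theorem master : ∀ (k : ℕ) (M B : Tm), HPathN k (subst M 0 B) (var 0) → NotFree 1 M →
    ∃ (as : List Tm) (k' : ℕ), k' ≤ k ∧ Red M (applist (var 0) as) ∧
      HPathN k' (applist B (as.map (fun A => subst A 0 B))) (var 0) := by
  intro k
  induction k using Nat.strong_induction_on with
  | _ k IH =>
  intro M B hpath hnf1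
  rcases spine_cases M with ⟨H, as, rfl, hH⟩
  have hsplit := notFree_applist hnf1
  -- helper for the two "M itself head-steps" cases
  have generic : ∀ M', Hstep (applist H as) M' → NotFree 1 M' →
      ∃ (as' : List Tm) (k' : ℕ), k' ≤ k ∧
        Red (applist H as) (applist (var 0) as') ∧
        HPathN k' (applist B (as'.map (fun A => subst A 0 B))) (var 0) := by
    intro M' hsM hnf'
    have hsub : Hstep (subst (applist H as) 0 B) (subst M' 0 B) := hstep_subst hsM 0 B
    generalize hS : subst (applist H as) 0 B = S at hpath hsub
    cases hpath with
    | refl => exact absurd hsub var_no_hstep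
    | cons hs hrest =>
      rename_i k₀ Y
      have hY : Y = subst M' 0 B := hstep_det hs hsub
      subst hY
      rcases IH k₀ (by omega) M' B hrest hnf' with ⟨as', k', hle, hred, hp⟩
      exact ⟨as', k', by omega, (Red.of_step (hstep_step hsM)).trans' hred, hp⟩
  cases H with
  | var n =>
    match n with
    | 0 =>
      refine ⟨as, k, le_refl k, Red.refl', ?_⟩
      have : subst (applist (var 0) as) 0 B
          = applist B (as.map (fun A => subst A 0 B)) := by
        rw [subst_applist]
        simp [subst]
      rwa [this] at hpath
    | 1 => exact absurd rfl hsplit.1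
    | (m+2) =>
      exfalso
      have hs : subst (applist (var (m+2)) as) 0 B
          = applist (var (m+1)) (as.map (fun A => subst A 0 B)) := by
        rw [subst_applist]
        simp [subst]
      rw [hs] at hpath
      have hvh : VarHead (m+1) (0 + (as.map (fun A => subst A 0 B)).length)
          (applist (var (m+1)) (as.map (fun A => subst A 0 B))) :=
        varHead_applist _ _ (VarHead.var (m+1))
      rcases hpath_stuck hpath (fun Z hZ => vh_no_hstep hvh hZ) with ⟨_, hW⟩
      rcases applist_eq_var hW.symm with ⟨hv, _⟩
      cases hv
  | bot =>
    cases as with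
    | nil =>
      exfalso
      rcases hpath_stuck (M := bot) hpath (fun Z hZ => bot_no_hstep hZ) with ⟨_, hW⟩
      cases hW
    | cons a rest =>
      rw [applist_cons] at *
      have hsM : Hstep (applist (app bot a) rest) (applist bot rest) :=
        hstep_applist (Hstep.hbotApp a) ⟨_, _, rfl⟩ rest
      have hnf' : NotFree 1 (applist bot rest) := by
        rcases notFree_applist hnf1 with ⟨_, hall⟩
        exact notFree_applist_intro trivial
          (fun b hb => hall b (by simp [hb]))
      rcases generic _ hsM hnf' with ⟨as', k', h1, h2, h3⟩
      exact ⟨as', k', h1, h2, h3⟩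
  | lam P =>
    cases as with
    | nil =>
      exfalso
      exact red_lam_var (hpath_red hpath)
    | cons a rest =>
      rw [applist_cons] at *
      have hsM : Hstep (applist (app (lam P) a) rest) (applist (subst P 0 a) rest) :=
        hstep_applist (Hstep.hbeta P a) ⟨_, _, rfl⟩ rest
      have hnf' : NotFree 1 (applist (subst P 0 a) rest) := by
        rcases notFree_applist hnf1 with ⟨⟨hP, ha⟩, hall⟩
        exact notFree_applist_intro (notFree_subst P a 0 1 (by omega) hP ha)
          (fun b hb => hall b (by simp [hb]))
      rcases generic _ hsM hnf' with ⟨as', k', h1, h2, h3⟩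
      exact ⟨as', k', h1, h2, h3⟩
  | app A B' => exact absurd rfl (hH A B')

end Tm
namespace Tm

/-! ### Head normal forms and head normalization -/

inductive Hnf : Tm → Prop
  | vh {n k : ℕ} {M : Tm} : VarHead n k M → Hnf M
  | lam {M : Tm} : Hnf M → Hnf (lam M)

def HN (M : Tm) : Prop := ∃ k W, HPathN k M W ∧ Hnf W

theorem varHead_lam {n k : ℕ} {P : Tm} (h : VarHead n k (lam P)) : False := by cases h

theorem varHead_bot {n k : ℕ} (h : VarHead n k (bot : Tm)) : False := by cases h

theorem hnf_bot (h : Hnf bot) : False := by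
  cases h with | vh h => exact varHead_bot h

theorem hnf_no_hstep {W Z : Tm} (h : Hnf W) (hs : Hstep W Z) : False := by
  induction h generalizing Z with
  | vh h => exact vh_no_hstep h hs
  | lam h ih =>
    cases hs with
    | hbotLam => exact hnf_bot h
    | hlamC hs => exact ih hs

theorem hn_prepend {M M' : Tm} (hs : Hstep M M') (h : HN M') : HN M := by
  rcases h with ⟨k, W, hp, hW⟩
  exact ⟨k+1, W, HPathN.cons hs hp, hW⟩

theorem hn_forward {M M' : Tm} (hs : Hstep M M') (h : HN M) : HN M' := by
  rcases h with ⟨k, W, hp, hW⟩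
  cases hp with
  | refl => exact absurd hs (hnf_no_hstep hW)
  | cons hs' hrest =>
    rw [hstep_det hs' hs] at hrest
    exact ⟨_, W, hrest, hW⟩

theorem hpath_map_lam {k : ℕ} {M W : Tm} (h : HPathN k M W) :
    HPathN k (lam M) (lam W) := by
  induction h with
  | refl M => exact HPathN.refl _
  | cons hs _ ih => exact HPathN.cons (Hstep.hlamC hs) ih

theorem hn_lam {M : Tm} (h : HN M) : HN (lam M) := by
  rcases h with ⟨k, W, hp, hW⟩
  exact ⟨k, lam W, hpath_map_lam hp, Hnf.lam hW⟩

theorem hpath_lam_inv {k : ℕ} {X W : Tm} (h : HPathN k (lam X) W) (hW : Hnf W) :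
    ∃ k' ≤ k, ∃ W', W = lam W' ∧ HPathN k' X W' ∧ Hnf W' := by
  induction k generalizing X with
  | zero =>
    cases h with
    | refl =>
      cases hW with
      | vh h => exact absurd h varHead_lam
      | lam h => exact ⟨0, le_refl 0, X, rfl, HPathN.refl X, h⟩
  | succ k ih =>
    cases h with
    | cons hs hrest =>
      cases hs with
      | hbotLam =>
        exfalso
        cases hrest with
        | refl => exact hnf_bot hW
        | cons hs' _ => exact bot_no_hstep hs'
      | hlamC hs =>
        rcases ih hrest with ⟨k', hk, W', rfl, hp, hW'⟩
        exact ⟨k'+1, by omega, W', rfl, HPathN.cons hs hp, hW'⟩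

theorem varHead_head {n k : ℕ} {X : Tm} {as : List Tm}
    (h : VarHead n k (applist X as)) : ∃ k', VarHead n k' X := by
  induction as using List.reverseRecOn generalizing k with
  | nil => exact ⟨k, h⟩
  | append_singleton as a ih =>
    rw [applist_snoc] at h
    cases h with
    | app _ h => exact ih h

theorem hn_subst_inv : ∀ (k : ℕ) (M : Tm) {j : ℕ} {N W : Tm} (k' : ℕ), k' ≤ k →
    HPathN k' (subst M j N) W → Hnf W → HN M := by
  intro k
  induction k using Nat.strong_induction_on with
  | _ k IHk =>
  intro M
  induction M with
  | var n => intro j N W k' _ _ _; exact ⟨0, var n, HPathN.refl _, Hnf.vh (VarHead.var n)⟩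
  | bot =>
    intro j N W k' hk hp hW
    exfalso
    rcases hpath_stuck (M := bot) hp (fun Z hZ => bot_no_hstep hZ) with ⟨_, rfl⟩
    exact hnf_bot hW
  | lam P ihP =>
    intro j N W k' hk hp hW
    rcases hpath_lam_inv hp hW with ⟨k'', hk'', W', rfl, hp', hW'⟩
    exact hn_lam (ihP (k'' ) (by omega) hp' hW')
  | app A B ihA ihB =>
    intro j N W k' hk hp hW
    clear ihA ihB
    rcases spine_cases (app A B) with ⟨H, as, hM, hH⟩
    rw [hM] at hp ⊢
    -- a generic handler when the term itself has a head step
    have generic : ∀ M', Hstep (applist H as) M' → (HN M' → HN (applist H as)) →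
        HN (applist H as) := by
      intro M' hsM hback
      have hsub : Hstep (subst (applist H as) j N) (subst M' j N) := hstep_subst hsM j N
      generalize hS : subst (applist H as) j N = S at hp hsub
      cases hp with
      | refl => exact absurd hsub (hnf_no_hstep hW)
      | cons hs hrest =>
        rename_i k₀ Y
        have hY : Y = subst M' j N := hstep_det hs hsub
        subst hY
        have hk₀ : k₀ < k := by omega
        exact hback (IHk k₀ hk₀ M' k₀ (le_refl _) hrest hW)
    cases H with
    | var n =>
      exact ⟨0, _, HPathN.refl _, Hnf.vh (varHead_applist _ _ (VarHead.var n))⟩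
    | bot =>
      cases as with
      | nil => simp [applist_nil] at hM
      | cons a rest =>
        rw [applist_cons] at *
        exact generic (applist bot rest)
          (hstep_applist (Hstep.hbotApp a) ⟨_, _, rfl⟩ rest)
          (fun h => hn_prepend (hstep_applist (Hstep.hbotApp a) ⟨_, _, rfl⟩ rest) h)
    | lam P =>
      cases as with
      | nil => simp [applist_nil] at hM
      | cons a rest =>
        rw [applist_cons] at *
        exact generic (applist (subst P 0 a) rest)
          (hstep_applist (Hstep.hbeta P a) ⟨_, _, rfl⟩ rest)
          (fun h => hn_prepend (hstep_applist (Hstep.hbeta P a) ⟨_, _, rfl⟩ rest) h)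
    | app X Y => exact absurd rfl (hH X Y)

theorem hn_app_inv : ∀ (k : ℕ) {M N W : Tm} (k' : ℕ), k' ≤ k →
    HPathN k' (app M N) W → Hnf W → HN M := by
  intro k
  induction k using Nat.strong_induction_on with
  | _ k IHk =>
  intro M N W k' hk hp hW
  cases hp with
  | refl =>
    cases hW with
    | vh h =>
      cases h with
      | app _ h => exact ⟨0, M, HPathN.refl M, Hnf.vh h⟩
  | cons hs hrest =>
    rename_i k₀ Y
    cases hs with
    | hbeta P Q =>
      have : HN P := hn_subst_inv k₀ P k₀ (le_refl _) hrest hW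
      exact hn_lam this
    | hbotApp =>
      exfalso
      rcases hpath_stuck (M := bot) hrest (fun Z hZ => bot_no_hstep hZ) with ⟨_, rfl⟩
      exact hnf_bot hW
    | happL _ hs' _ =>
      rename_i M₁ _
      have : HN M₁ := IHk k₀ (by omega) k₀ (le_refl _) hrest hW
      exact hn_prepend hs' this
end Tm
/-! ### Subtyping theory: the inversion calculus Q -/

def trivS : STy → Prop
  | .omega => True
  | .tvar _ => False
  | .arrow _ k => trivS k

def Q : ITy → STy → Prop
  | _, .omega => True
  | σ, .tvar n => IsComp (.tvar n) σ
  | σ, .arrow τ l => trivS l ∨ ∃ σ' κ', IsComp (.arrow σ' κ') σ ∧ SubTy τ σ' ∧ Q (.strict κ') l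

def dS : STy → ℕ
  | .tvar _ => 0
  | .omega => 0
  | .arrow _ k => dS k + 1

/-- Spine-recursion principle for strict types (avoiding the mutual recursor). -/
theorem sty_rec' {motive : STy → Prop} (htv : ∀ n, motive (.tvar n)) (hom : motive .omega)
    (harr : ∀ τ l, motive l → motive (.arrow τ l)) : ∀ k, motive k := by
  have H : ∀ d k, dS k ≤ d → motive k := by
    intro d
    induction d with
    | zero =>
      intro k hk
      match k with
      | .tvar n => exact htv n
      | .omega => exact hom
      | .arrow τ l => simp [dS] at hk
    | succ d ih =>
      intro k hk
      match k with
      | .tvar n => exact htv n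
      | .omega => exact hom
      | .arrow τ l => exact harr τ l (ih l (by simp [dS] at hk; omega))
  exact fun k => H (dS k) k (le_refl _)

theorem isComp_strict_inv {m u : STy} (h : IsComp m (.strict u)) : m = u := by
  cases h; rfl

theorem Qmono : ∀ (k : STy) {σ σ' : ITy}, (∀ m, IsComp m σ → IsComp m σ') →
    Q σ k → Q σ' k := by
  intro k
  induction k using sty_rec' with
  | htv n => exact fun hm h => hm _ h
  | hom => intros; trivial
  | harr τ l ihl =>
    rintro σ σ' hm (h | ⟨a, b, hc, hs, hq⟩)
    · exact Or.inl h
    · exact Or.inr ⟨a, b, hm _ hc, hs, hq⟩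

theorem Qrefl : ∀ (l : STy) (σ : ITy), IsComp l σ → Q σ l := by
  intro l
  induction l using sty_rec' with
  | htv n => exact fun σ h => h
  | hom => intros; trivial
  | harr τ l ihl =>
    intro σ h
    exact Or.inr ⟨τ, l, h, SubTy.refl τ, ihl _ (IsComp.strict l)⟩

theorem Qtriv : ∀ (k : STy) {σ : ITy}, (∀ m, IsComp m σ → trivS m) → Q σ k → trivS k := by
  intro k
  induction k using sty_rec' with
  | htv n => exact fun ht h => ht _ h
  | hom => intros; trivial
  | harr τ l ihl =>
    rintro σ ht (h | ⟨a, b, hc, hs, hq⟩)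
    · exact h
    · show trivS l
      have hb : trivS b := (ht _ hc : trivS (.arrow a b))
      exact ihl (fun m hm => by rw [isComp_strict_inv hm]; exact hb) hq

theorem Qtrans : ∀ (k : STy) {σ τ : ITy}, (∀ m, IsComp m τ → Q σ m) → Q τ k → Q σ k := by
  intro k
  induction k using sty_rec' with
  | htv n => exact fun h hq => h _ hq
  | hom => intros; trivial
  | harr τ₀ l ihl =>
    intro σ τ h hq
    rcases hq with hq | ⟨a, b, hc, hs, hq⟩
    · exact Or.inl hq
    · rcases h _ hc with h2 | ⟨a', b', hc', hs', hq'⟩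
      · refine Or.inl (Qtriv l (fun m hm => ?_) hq)
        rw [isComp_strict_inv hm]
        exact h2
      · refine Or.inr ⟨a', b', hc', SubTy.trans hs hs', ?_⟩
        refine ihl (fun m hm => ?_) hq
        rw [isComp_strict_inv hm]
        exact hq'

theorem subty_Q {σ τ : ITy} (h : SubTy σ τ) : ∀ k, IsComp k τ → Q σ k := by
  induction h with
  | refl σ => exact fun k h => Qrefl k σ h
  | trans h1 h2 ih1 ih2 => exact fun k hk => Qtrans k ih1 (ih2 k hk)
  | toOmega σ => intro k hk; rw [isComp_strict_inv hk]; trivial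
  | omegaArr =>
    intro k hk
    rw [isComp_strict_inv hk]
    exact Or.inl trivial
  | interL σ τ => exact fun k hk => Qrefl k _ (IsComp.left τ hk)
  | interR σ τ => exact fun k hk => Qrefl k _ (IsComp.right σ hk)
  | interMono h1 h2 ih1 ih2 =>
    intro k hk
    cases hk with
    | left τ h => exact Qmono k (fun m hm => IsComp.left _ hm) (ih1 k h)
    | right σ h => exact Qmono k (fun m hm => IsComp.right _ hm) (ih2 k h)
  | @arrow σ τ μ ν h1 h2 ih1 ih2 =>
    intro k hk
    rw [isComp_strict_inv hk]
    exact Or.inr ⟨σ, μ, IsComp.strict _, h1, ih2 ν (IsComp.strict ν)⟩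

theorem comp_proj {m : STy} {σ : ITy} (h : IsComp m σ) : SubTy σ (.strict m) := by
  induction h with
  | strict => exact SubTy.refl _
  | left τ h ih => exact SubTy.trans (SubTy.interL _ _) ih
  | right σ h ih => exact SubTy.trans (SubTy.interR _ _) ih

theorem trivS_expand : ∀ {k : STy}, trivS k → SubTy (.strict .omega) (.strict k) := by
  intro k
  induction k using sty_rec' with
  | htv n => intro h; cases h
  | hom => intro; exact SubTy.refl _
  | harr σ l ihl =>
    intro h
    exact SubTy.trans SubTy.omegaArr (SubTy.arrow (SubTy.toOmega σ) (ihl h))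

theorem Qcomplete : ∀ (k : STy) {σ : ITy}, Q σ k → SubTy σ (.strict k) := by
  intro k
  induction k using sty_rec' with
  | htv n => exact fun h => comp_proj h
  | hom => intro σ _; exact SubTy.toOmega σ
  | harr τ l ihl =>
    rintro σ (h | ⟨a, b, hc, hs, hq⟩)
    · exact SubTy.trans (SubTy.toOmega σ) (trivS_expand (show trivS (.arrow τ l) from h))
    · exact SubTy.trans (comp_proj hc) (SubTy.arrow hs (ihl hq))

theorem subty_strict_iff {σ : ITy} {k : STy} : SubTy σ (.strict k) ↔ Q σ k :=
  ⟨fun h => subty_Q h k (IsComp.strict k), Qcomplete k⟩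

theorem q_omega_triv {k : STy} (h : Q (.strict .omega) k) : trivS k :=
  Qtriv k (fun m hm => by rw [isComp_strict_inv hm]; trivial) h

theorem trivS_iff {k : STy} : trivS k ↔ SubTy (.strict .omega) (.strict k) :=
  ⟨trivS_expand, fun h => q_omega_triv (subty_strict_iff.mp h)⟩

theorem trivS_mono {u v : STy} (h : SubTy (.strict u) (.strict v)) (ht : trivS u) :
    trivS v := trivS_iff.mpr (SubTy.trans (trivS_expand ht) h)

/-! ### Stripping and depth -/

inductive Strip : ℕ → STy → STy → Prop
  | zero (b) : Strip 0 b b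
  | succ {m b c} (ρ) : Strip m b c → Strip (m+1) (.arrow ρ b) c

theorem strip_d {m : ℕ} {b c : STy} (h : Strip m b c) : dS b = dS c + m := by
  induction h with
  | zero b => rfl
  | succ ρ h ih => show dS _ + 1 = _; omega

theorem strip_triv {m : ℕ} {b c : STy} (h : Strip m b c) : trivS b ↔ trivS c := by
  induction h with
  | zero b => exact Iff.rfl
  | succ ρ h ih => exact ih

theorem eqd : ∀ (v u : STy), Q (.strict u) v → Q (.strict v) u → ¬ trivS u →
    dS u = dS v := by
  intro v
  induction v using sty_rec' with
  | hom => intro u h1 h2 hnt; exact absurd (q_omega_triv h2) hnt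
  | htv n =>
    intro u h1 h2 hnt
    have he := isComp_strict_inv (show IsComp (.tvar n) (.strict u) from h1)
    rw [← he]
  | harr τ l ihl =>
    intro u h1 h2 hnt
    rcases h1 with h1 | ⟨a, b, hc, hs, hq⟩
    · exfalso
      apply hnt
      refine Qtriv u (fun m hm => ?_) h2
      rw [isComp_strict_inv hm]
      exact h1
    · have hu : u = .arrow a b := (isComp_strict_inv hc).symm
      subst hu
      rcases h2 with h2 | ⟨a', b', hc', hs', hq'⟩
      · exact absurd h2 hnt
      · have he : STy.arrow a' b' = STy.arrow τ l := isComp_strict_inv hc'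
        cases he
        have hnb : ¬ trivS b := hnt
        have := ihl b hq hq' hnb
        show dS b + 1 = dS l + 1
        omega

theorem trivS_arrows : ∀ (l : List ITy) (t : STy), trivS (arrows l t) ↔ trivS t := by
  intro l
  induction l with
  | nil => exact fun t => Iff.rfl
  | cons π rest ih => exact fun t => ih t

theorem arrows_strip : ∀ (ρs : List ITy) (c : STy), Strip ρs.length (arrows ρs c) c := by
  intro ρs
  induction ρs with
  | nil => exact fun c => Strip.zero c
  | cons ρ rest ih => exact fun c => Strip.succ ρ (ih c)

theorem striple : ∀ (πs : List ITy) (a b : STy), Q (.strict b) (arrows πs a) → ¬ trivS a →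
    ∃ (ρs : List ITy) (c : STy), b = arrows ρs c ∧ List.Forall₂ SubTy πs ρs ∧
      Q (.strict c) a := by
  intro πs
  induction πs with
  | nil => exact fun a b h _ => ⟨[], b, rfl, List.Forall₂.nil, h⟩
  | cons π rest ih =>
    intro a b h hnt
    rcases h with h | ⟨σ', κ', hc, hs, hq⟩
    · exact absurd ((trivS_arrows rest a).mp h) hnt
    · have hb : b = .arrow σ' κ' := (isComp_strict_inv hc).symm
      subst hb
      rcases ih a κ' hq hnt with ⟨ρs, c, rfl, hf, hqc⟩
      exact ⟨σ' :: ρs, c, rfl, List.Forall₂.cons hs hf, hqc⟩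
/-! ### Typing toolkit -/

theorem anyTriv {Γ : List ITy} {M : Tm} {k : STy} (h : trivS k) : Der Γ M k :=
  Der.sub (Der.omega Γ M) (trivS_expand h)

theorem derQ {Γ : List ITy} {N : Tm} {π : ITy} {ν : STy} (hq : Q π ν)
    (hall : ∀ p, IsComp p π → Der Γ N p) : Der Γ N ν := by
  match ν, hq with
  | .omega, _ => exact Der.omega Γ N
  | .tvar n, hq => exact hall _ hq
  | .arrow τ l, Or.inl ht => exact anyTriv ht
  | .arrow τ l, Or.inr ⟨σ', κ', hc, hs, hq'⟩ =>
    exact Der.sub (hall _ hc)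
      (Qcomplete _ (Or.inr ⟨σ', κ', IsComp.strict _, hs, hq'⟩))

def CtxLe (Γ' Γ : List ITy) : Prop :=
  ∀ (n : ℕ) (σ : ITy), Γ[n]? = some σ → ∃ σ', Γ'[n]? = some σ' ∧ SubTy σ' σ

theorem ctxLe_cons {Γ' Γ : List ITy} (h : CtxLe Γ' Γ) (σ : ITy) :
    CtxLe (σ :: Γ') (σ :: Γ) := by
  intro n τ hg
  match n with
  | 0 =>
    rw [List.getElem?_cons_zero] at hg
    cases hg
    exact ⟨σ, by simp, SubTy.refl σ⟩
  | n+1 =>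
    rw [List.getElem?_cons_succ] at hg
    rcases h n τ hg with ⟨σ', hg', hs⟩
    exact ⟨σ', by simpa using hg', hs⟩

theorem ctxLe_head {Γ : List ITy} {τ' τ : ITy} (hs : SubTy τ' τ) :
    CtxLe (τ' :: Γ) (τ :: Γ) := by
  intro n σ hg
  match n with
  | 0 =>
    rw [List.getElem?_cons_zero] at hg
    cases hg
    exact ⟨τ', by simp, hs⟩
  | n+1 =>
    rw [List.getElem?_cons_succ] at hg
    exact ⟨σ, by simpa using hg, SubTy.refl σ⟩

theorem ctx_sub {Γ : List ITy} {M : Tm} {k : STy} (h : Der Γ M k) :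
    ∀ {Γ'}, CtxLe Γ' Γ → Der Γ' M k := by
  induction h with
  | var hg hcomp =>
    intro Γ' hc
    rcases hc _ _ hg with ⟨σ', hg', hs⟩
    exact derQ (subty_Q hs _ hcomp) (fun p hp => Der.var hg' hp)
  | omega Γ M => intro Γ' _; exact Der.omega Γ' M
  | sub h hsub ih => intro Γ' hc; exact Der.sub (ih hc) hsub
  | lam h ih => intro Γ' hc; exact Der.lam (ih (ctxLe_cons hc _))
  | app hM hN ihM ihN =>
    intro Γ' hc
    exact Der.app (ihM hc) (fun p hp => ihN p hp hc)

theorem gen_var {Γ : List ITy} {M : Tm} {k : STy} (h : Der Γ M k) :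
    ∀ n, M = .var n → trivS k ∨ ∃ σ, Γ[n]? = some σ ∧ Q σ k := by
  induction h with
  | @var Γ n₀ σ m hg hcomp =>
    intro n he
    cases he
    exact Or.inr ⟨σ, hg, Qrefl m σ hcomp⟩
  | omega Γ M => exact fun n _ => Or.inl trivial
  | @sub Γ M u v h hsub ih =>
    intro n he
    rcases ih n he with ht | ⟨σ, hg, hq⟩
    · exact Or.inl (trivS_mono hsub ht)
    · refine Or.inr ⟨σ, hg, Qtrans _ (fun m hm => ?_) (subty_strict_iff.mp hsub)⟩
      rw [isComp_strict_inv hm]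
      exact hq
  | lam h ih => intro n he; cases he
  | app hM hN ihM ihN => intro n he; cases he

theorem gen_bot {Γ : List ITy} {M : Tm} {k : STy} (h : Der Γ M k) :
    M = .bot → trivS k := by
  induction h with
  | var hg hcomp => intro he; cases he
  | omega Γ M => exact fun _ => trivial
  | sub h hsub ih => intro he; exact trivS_mono hsub (ih he)
  | lam h ih => intro he; cases he
  | app hM hN ihM ihN => intro he; cases he

theorem gen_lam {Γ : List ITy} {M : Tm} {k : STy} (h : Der Γ M k) :
    ∀ P, M = .lam P → trivS k ∨ ∃ τ l, k = .arrow τ l ∧ Der (τ :: Γ) P l := by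
  induction h with
  | var hg hcomp => intro P he; cases he
  | omega Γ M => exact fun P _ => Or.inl trivial
  | @sub Γ M u v h hsub ih =>
    intro P he
    rcases ih P he with ht | ⟨τ, l, rfl, hP⟩
    · exact Or.inl (trivS_mono hsub ht)
    · have hq : Q (.strict (.arrow τ l)) v := subty_strict_iff.mp hsub
      revert hq
      induction v using sty_rec' with
      | htv n =>
        intro hq
        have := isComp_strict_inv (show IsComp (.tvar n) (.strict (.arrow τ l)) from hq)
        cases this
      | hom => intro _; exact Or.inl trivial
      | harr τ' l' _ =>
        rintro (ht | ⟨a, b, hc, hs, hq⟩)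
        · exact Or.inl ht
        · have he2 : STy.arrow a b = STy.arrow τ l := isComp_strict_inv hc
          cases he2
          refine Or.inr ⟨τ', l', rfl, ?_⟩
          exact Der.sub (ctx_sub hP (ctxLe_head hs)) (Qcomplete _ hq)
  | @lam Γ P₀ σ μ h ih =>
    intro P he
    cases he
    exact Or.inr ⟨σ, μ, rfl, h⟩
  | app hM hN ihM ihN => intro P he; cases he

theorem gen_app {Γ : List ITy} {M : Tm} {k : STy} (h : Der Γ M k) :
    ∀ A B, M = .app A B →
      trivS k ∨ ∃ σ, Der Γ A (.arrow σ k) ∧ ∀ p, IsComp p σ → Der Γ B p := by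
  induction h with
  | var hg hcomp => intro A B he; cases he
  | omega Γ M => exact fun A B _ => Or.inl trivial
  | @sub Γ M u v h hsub ih =>
    intro A B he
    rcases ih A B he with ht | ⟨σ, hA, hB⟩
    · exact Or.inl (trivS_mono hsub ht)
    · exact Or.inr ⟨σ, Der.sub hA (SubTy.arrow (SubTy.refl σ) hsub), hB⟩
  | lam h ih => intro A B he; cases he
  | @app Γ M N σ μ hM hN ihM ihN =>
    intro A B he
    cases he
    exact Or.inr ⟨σ, hM, hN⟩

theorem weaken {Γ : List ITy} {M : Tm} {k : STy} (h : Der Γ M k) :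
    ∀ Γ₁ Γ₂ (τ : ITy), Γ = Γ₁ ++ Γ₂ →
      Der (Γ₁ ++ τ :: Γ₂) (Tm.lift M Γ₁.length) k := by
  induction h with
  | @var Γ n σ m hg hcomp =>
    intro Γ₁ Γ₂ τ he
    subst he
    simp only [Tm.lift]
    split_ifs with hn
    · refine Der.var ?_ hcomp
      rw [List.getElem?_append_left hn] at hg
      rw [List.getElem?_append_left hn]
      exact hg
    · refine Der.var ?_ hcomp
      push_neg at hn
      rw [List.getElem?_append_right hn] at hg
      rw [List.getElem?_append_right (by omega : Γ₁.length ≤ n+1)]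
      have : n + 1 - Γ₁.length = (n - Γ₁.length) + 1 := by omega
      rw [this]
      simpa using hg
  | omega Γ M => intro Γ₁ Γ₂ τ he; exact Der.omega _ _
  | sub h hsub ih => intro Γ₁ Γ₂ τ he; exact Der.sub (ih Γ₁ Γ₂ τ he) hsub
  | @lam Γ M σ μ h ih =>
    intro Γ₁ Γ₂ τ he
    subst he
    exact Der.lam (ih (σ :: Γ₁) Γ₂ τ rfl)
  | app hM hN ihM ihN =>
    intro Γ₁ Γ₂ τ he
    exact Der.app (ihM Γ₁ Γ₂ τ he) (fun p hp => ihN p hp Γ₁ Γ₂ τ he)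

theorem weaken0 {Γ : List ITy} {M : Tm} {k : STy} (h : Der Γ M k) (τ : ITy) :
    Der (τ :: Γ) (Tm.lift M 0) k := weaken h [] Γ τ rfl

theorem subst_der {Γ : List ITy} {M : Tm} {k : STy} (h : Der Γ M k) :
    ∀ Γ₁ (σ : ITy) Γ₂ (N : Tm), Γ = Γ₁ ++ σ :: Γ₂ →
      (∀ p, IsComp p σ → Der (Γ₁ ++ Γ₂) N p) →
      Der (Γ₁ ++ Γ₂) (Tm.subst M Γ₁.length N) k := by
  induction h with
  | @var Γ n σ₀ m hg hcomp =>
    intro Γ₁ σ Γ₂ N he hN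
    subst he
    simp only [Tm.subst]
    rcases Nat.lt_trichotomy n Γ₁.length with hn | hn | hn
    · rw [if_pos hn]
      refine Der.var ?_ hcomp
      rw [List.getElem?_append_left hn] at hg
      rw [List.getElem?_append_left hn]
      exact hg
    · rw [if_neg (by omega), if_pos hn]
      rw [List.getElem?_append_right (by omega : Γ₁.length ≤ n)] at hg
      rw [hn] at hg
      simp at hg
      subst hg
      exact hN m hcomp
    · rw [if_neg (by omega), if_neg (by omega)]
      refine Der.var ?_ hcomp
      rw [List.getElem?_append_right (by omega : Γ₁.length ≤ n)] at hg
      rw [List.getElem?_append_right (by omega : Γ₁.length ≤ n - 1)]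
      have : n - Γ₁.length = (n - 1 - Γ₁.length) + 1 := by omega
      rw [this] at hg
      simpa using hg
  | omega Γ M => intro Γ₁ σ Γ₂ N he hN; exact Der.omega _ _
  | sub h hsub ih => intro Γ₁ σ Γ₂ N he hN; exact Der.sub (ih Γ₁ σ Γ₂ N he hN) hsub
  | @lam Γ M τ₀ μ h ih =>
    intro Γ₁ σ Γ₂ N he hN
    subst he
    refine Der.lam ?_
    have := ih (τ₀ :: Γ₁) σ Γ₂ (Tm.lift N 0) rfl
      (fun p hp => weaken (hN p hp) [] (Γ₁ ++ Γ₂) τ₀ rfl)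
    exact this
  | app hM hN ihM ihN =>
    intro Γ₁ σ Γ₂ N he hN'
    exact Der.app (ihM Γ₁ σ Γ₂ N he hN') (fun p hp => ihN p hp Γ₁ σ Γ₂ N he hN')

theorem step_der {M M' : Tm} (hs : Tm.Step M M') : ∀ {Γ k}, Der Γ M k → Der Γ M' k := by
  induction hs with
  | beta P Q =>
    intro Γ k h
    rcases gen_app h _ _ rfl with ht | ⟨σ, hA, hB⟩
    · exact anyTriv ht
    · rcases gen_lam hA _ rfl with ht | ⟨τ, l, he, hP⟩
      · exact anyTriv (show trivS k from ht)
      · cases he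
        exact subst_der hP [] _ Γ Q rfl hB
  | botApp Q =>
    intro Γ k h
    rcases gen_app h _ _ rfl with ht | ⟨σ, hA, hB⟩
    · exact anyTriv ht
    · have ht : trivS (STy.arrow σ k) := gen_bot hA rfl
      exact anyTriv (ht : trivS k)
  | botLam =>
    intro Γ k h
    rcases gen_lam h _ rfl with ht | ⟨τ, l, rfl, hP⟩
    · exact anyTriv ht
    · have ht : trivS l := gen_bot hP rfl
      exact anyTriv (ht : trivS (STy.arrow τ l))
  | appL Q hs ih =>
    intro Γ k h
    rcases gen_app h _ _ rfl with ht | ⟨σ, hA, hB⟩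
    · exact anyTriv ht
    · exact Der.app (ih hA) hB
  | appR P hs ih =>
    intro Γ k h
    rcases gen_app h _ _ rfl with ht | ⟨σ, hA, hB⟩
    · exact anyTriv ht
    · exact Der.app hA (fun p hp => ih (hB p hp))
  | lamC hs ih =>
    intro Γ k h
    rcases gen_lam h _ rfl with ht | ⟨τ, l, rfl, hP⟩
    · exact anyTriv ht
    · exact Der.lam (ih hP)

theorem red_der {M M' : Tm} (hs : Tm.Red M M') {Γ : List ITy} {k : STy}
    (h : Der Γ M k) : Der Γ M' k := by
  induction hs with
  | refl => exact h
  | tail _ hstep ih => exact step_der hstep ih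
namespace Tm

/-! ### Simultaneous substitution -/

def msubst : Tm → (ℕ → Tm) → Tm
  | var n, s => s n
  | bot, _ => bot
  | lam M, s => lam (msubst M (fun n => match n with
      | 0 => var 0
      | n+1 => lift (s n) 0))
  | app M N, s => app (msubst M s) (msubst N s)

def scons (N : Tm) (s : ℕ → Tm) : ℕ → Tm
  | 0 => N
  | n+1 => s n

def up (s : ℕ → Tm) : ℕ → Tm := scons (var 0) (fun n => lift (s n) 0)

theorem msubst_lam (M : Tm) (s : ℕ → Tm) : msubst (lam M) s = lam (msubst M (up s)) := rfl

theorem msubst_ext : ∀ (M : Tm) (s t : ℕ → Tm), (∀ n, s n = t n) → msubst M s = msubst M t := by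
  intro M
  induction M with
  | var n => intro s t h; exact h n
  | bot => intros; rfl
  | lam M ih =>
    intro s t h
    rw [msubst_lam, msubst_lam]
    congr 1
    refine ih _ _ (fun n => ?_)
    cases n with
    | zero => rfl
    | succ n => show lift (s n) 0 = lift (t n) 0; rw [h n]
  | app M N ihM ihN => intro s t h; show app _ _ = app _ _; rw [ihM s t h, ihN s t h]

theorem msubst_id : ∀ M : Tm, msubst M (fun n => var n) = M := by
  intro M
  induction M with
  | var n => rfl
  | bot => rfl
  | lam M ih =>
    rw [msubst_lam]
    congr 1
    rw [msubst_ext _ (up fun n => var n) (fun n => var n) (fun n => by cases n <;> rfl), ih]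
  | app M N ihM ihN => show app _ _ = app _ _; rw [ihM, ihN]

def upn : ℕ → (ℕ → Tm) → (ℕ → Tm)
  | 0, s => s
  | k+1, s => up (upn k s)

def liftn : Tm → ℕ → Tm
  | N, 0 => N
  | N, k+1 => lift (liftn N k) 0

theorem upn_pt : ∀ (k : ℕ) (s : ℕ → Tm) (N : Tm) (n : ℕ),
    subst (upn k (up s) n) k (liftn N k) = upn k (scons N s) n := by
  intro k
  induction k with
  | zero =>
    intro s N n
    cases n with
    | zero => simp [upn, up, scons, subst, liftn]
    | succ n => show subst (lift (s n) 0) 0 N = s n; exact subst_lift _ _ _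
  | succ k ih =>
    intro s N n
    cases n with
    | zero => simp [upn, up, scons, subst, liftn]
    | succ n =>
      show subst (lift (upn k (up s) n) 0) (k+1) (lift (liftn N k) 0) = lift (upn k (scons N s) n) 0
      rw [← lift_subst _ 0 k _ (by omega), ih s N n]

theorem msubst_subst_gen : ∀ (M : Tm) (k : ℕ) (s : ℕ → Tm) (N : Tm),
    subst (msubst M (upn k (up s))) k (liftn N k) = msubst M (upn k (scons N s)) := by
  intro M
  induction M with
  | var n => intro k s N; exact upn_pt k s N n
  | bot => intros; rfl
  | lam M ih =>
    intro k s N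
    rw [msubst_lam, msubst_lam]
    show lam _ = lam _
    congr 1
    have := ih (k+1) s N
    simpa [upn, liftn] using this
  | app M P ihM ihP =>
    intro k s N
    show app _ _ = app _ _
    rw [ihM k s N, ihP k s N]

theorem msubst_subst (M : Tm) (s : ℕ → Tm) (N : Tm) :
    subst (msubst M (up s)) 0 N = msubst M (scons N s) := msubst_subst_gen M 0 s N

end Tm
/-! ### Reducibility: typable terms are head normalizing -/

mutual
def sizeS : STy → ℕ
  | .tvar _ => 1
  | .omega => 1
  | .arrow σ k => sizeI σ + sizeS k + 1
def sizeI : ITy → ℕ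
  | .strict m => sizeS m + 1
  | .inter a b => sizeI a + sizeI b + 1
end

theorem comp_size {m : STy} {σ : ITy} (h : IsComp m σ) : sizeS m < sizeI σ := by
  induction h with
  | strict => simp [sizeI]
  | left τ h ih => simp [sizeI]; omega
  | right σ h ih => simp [sizeI]; omega

def C : STy → Tm → Prop
  | .omega, _ => True
  | .tvar _, M => Tm.HN M
  | .arrow σ k, M => ∀ N, (∀ m, IsComp m σ → C m N) → C k (Tm.app M N)
termination_by k _ => sizeS k
decreasing_by
  · have := comp_size (show IsComp m σ by assumption)
    simp [sizeS]; omega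
  · simp [sizeS]

theorem C_omega (M : Tm) : C .omega M := by rw [C]; trivial

theorem C_tvar {n : ℕ} {M : Tm} : C (.tvar n) M ↔ Tm.HN M := by rw [C]

theorem C_arrow {σ : ITy} {k : STy} {M : Tm} :
    C (.arrow σ k) M ↔ ∀ N, (∀ m, IsComp m σ → C m N) → C k (Tm.app M N) := by rw [C]

theorem c_triv : ∀ (k : STy), trivS k → ∀ M, C k M := by
  intro k
  induction k using sty_rec' with
  | htv n => intro h; cases h
  | hom => intro _ M; exact C_omega M
  | harr σ k ih =>
    intro h M
    rw [C_arrow]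
    intro N _
    exact ih h _

theorem c_vh : ∀ (k : STy) {n q : ℕ} {M : Tm}, Tm.VarHead n q M → C k M := by
  intro k
  induction k using sty_rec' with
  | htv m => intro n q M h; exact C_tvar.mpr ⟨0, M, Tm.HPathN.refl M, Tm.Hnf.vh h⟩
  | hom => intro n q M _; exact C_omega M
  | harr σ k ih =>
    intro n q M h
    rw [C_arrow]
    intro N _
    exact ih (Tm.VarHead.app N h)

theorem c_nothn_triv : ∀ (k : STy) (M : Tm), C k M → ¬ Tm.HN M → trivS k := by
  intro k
  induction k using sty_rec' with
  | htv n => intro M hC hHN; exact absurd (C_tvar.mp hC) hHN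
  | hom => intros; trivial
  | harr σ k ih =>
    intro M hC hHN
    show trivS k
    have h1 : C k (Tm.app M (Tm.var 0)) :=
      C_arrow.mp hC (Tm.var 0) (fun m _ => c_vh m (Tm.VarHead.var 0))
    refine ih _ h1 (fun hhn => hHN ?_)
    rcases hhn with ⟨q, W, hp, hW⟩
    exact Tm.hn_app_inv q q (le_refl q) hp hW

theorem c_step : ∀ (k : STy) (M M' : Tm), Tm.Hstep M M' → (C k M → C k M') ∧ (C k M' → C k M) := by
  intro k
  induction k using sty_rec' with
  | htv n =>
    intro M M' hs
    constructor
    · intro h; exact C_tvar.mpr (Tm.hn_forward hs (C_tvar.mp h))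
    · intro h; exact C_tvar.mpr (Tm.hn_prepend hs (C_tvar.mp h))
  | hom => intro M M' hs; exact ⟨fun _ => C_omega M', fun _ => C_omega M⟩
  | harr σ k ih =>
    intro M M' hs
    cases hs with
    | hbeta P Q =>
      constructor
      · intro hC
        rw [C_arrow] at hC ⊢
        intro N hN
        have hstep : Tm.Hstep (Tm.app (Tm.app (Tm.lam P) Q) N)
            (Tm.app (Tm.subst P 0 Q) N) :=
          Tm.Hstep.happL N (Tm.Hstep.hbeta P Q) (fun R hR => by cases hR)
        exact (ih _ _ hstep).1 (hC N hN)
      · intro hC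
        rw [C_arrow] at hC ⊢
        intro N hN
        have hstep : Tm.Hstep (Tm.app (Tm.app (Tm.lam P) Q) N)
            (Tm.app (Tm.subst P 0 Q) N) :=
          Tm.Hstep.happL N (Tm.Hstep.hbeta P Q) (fun R hR => by cases hR)
        exact (ih _ _ hstep).2 (hC N hN)
    | hbotApp Q =>
      constructor
      · intro hC
        rw [C_arrow] at hC ⊢
        intro N hN
        have hstep : Tm.Hstep (Tm.app (Tm.app Tm.bot Q) N) (Tm.app Tm.bot N) :=
          Tm.Hstep.happL N (Tm.Hstep.hbotApp Q) (fun R hR => by cases hR)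
        exact (ih _ _ hstep).1 (hC N hN)
      · intro hC
        rw [C_arrow] at hC ⊢
        intro N hN
        have hstep : Tm.Hstep (Tm.app (Tm.app Tm.bot Q) N) (Tm.app Tm.bot N) :=
          Tm.Hstep.happL N (Tm.Hstep.hbotApp Q) (fun R hR => by cases hR)
        exact (ih _ _ hstep).2 (hC N hN)
    | hbotLam =>
      constructor
      · intro hC
        rw [C_arrow] at hC ⊢
        intro N hN
        -- C k (app (lam bot) N) → C k (subst bot 0 N) = C k bot → C k (app bot N)
        have h1 : C k (Tm.app (Tm.lam Tm.bot) N) := hC N hN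
        have h2 : C k (Tm.bot) := (ih _ _ (Tm.Hstep.hbeta Tm.bot N)).1 h1
        exact (ih _ _ (Tm.Hstep.hbotApp N)).2 h2
      · intro hC
        -- C (σ→k) bot: bot is not HN, so the type is trivial
        have ht : trivS (STy.arrow σ k) := by
          refine c_nothn_triv _ _ hC (fun h => ?_)
          rcases h with ⟨q, W, hp, hW⟩
          rcases Tm.hpath_stuck hp (fun Z hZ => Tm.bot_no_hstep hZ) with ⟨_, rfl⟩
          exact Tm.hnf_bot hW
        exact c_triv _ ht _
    | @happL M₀ M₀' N₀ hs0 hcond =>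
      constructor
      · intro hC
        rw [C_arrow] at hC ⊢
        intro N hN
        have hstep : Tm.Hstep (Tm.app (Tm.app M₀ N₀) N) (Tm.app (Tm.app M₀' N₀) N) :=
          Tm.Hstep.happL N (Tm.Hstep.happL N₀ hs0 hcond) (fun R hR => by cases hR)
        exact (ih _ _ hstep).1 (hC N hN)
      · intro hC
        rw [C_arrow] at hC ⊢
        intro N hN
        have hstep : Tm.Hstep (Tm.app (Tm.app M₀ N₀) N) (Tm.app (Tm.app M₀' N₀) N) :=
          Tm.Hstep.happL N (Tm.Hstep.happL N₀ hs0 hcond) (fun R hR => by cases hR)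
        exact (ih _ _ hstep).2 (hC N hN)
    | @hlamC P P' hs0 =>
      constructor
      · intro hC
        rw [C_arrow] at hC ⊢
        intro N hN
        have h1 : C k (Tm.app (Tm.lam P) N) := hC N hN
        have h2 : C k (Tm.subst P 0 N) := (ih _ _ (Tm.Hstep.hbeta P N)).1 h1
        have h3 : C k (Tm.subst P' 0 N) := (ih _ _ (Tm.hstep_subst hs0 0 N)).1 h2
        exact (ih _ _ (Tm.Hstep.hbeta P' N)).2 h3
      · intro hC
        rw [C_arrow] at hC ⊢
        intro N hN
        have h1 : C k (Tm.app (Tm.lam P') N) := hC N hN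
        have h2 : C k (Tm.subst P' 0 N) := (ih _ _ (Tm.Hstep.hbeta P' N)).1 h1
        have h3 : C k (Tm.subst P 0 N) := (ih _ _ (Tm.hstep_subst hs0 0 N)).2 h2
        exact (ih _ _ (Tm.Hstep.hbeta P N)).2 h3

theorem joint : ∀ (n : ℕ) (σ : ITy) (m : STy) (M : Tm), sizeI σ + sizeS m ≤ n →
    Q σ m → (∀ p, IsComp p σ → C p M) → C m M := by
  intro n
  induction n using Nat.strong_induction_on with
  | _ n IH =>
  intro σ m M hsz hq hall
  match m, hq with
  | .omega, _ => exact C_omega M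
  | .tvar j, hq => exact hall _ hq
  | .arrow τ l, Or.inl ht => exact c_triv (STy.arrow τ l) ht M
  | .arrow τ l, Or.inr ⟨σ', κ', hc, hs, hq'⟩ =>
    have hC : C (.arrow σ' κ') M := hall _ hc
    rw [C_arrow] at hC ⊢
    intro N hN
    have hsz1 : sizeS (STy.arrow σ' κ') < sizeI σ := comp_size hc
    simp [sizeS] at hsz1
    have hN' : ∀ p, IsComp p σ' → C p N := by
      intro p hp
      have hqp : Q τ p := subty_Q hs p hp
      have hps : sizeS p < sizeI σ' := comp_size hp
      refine IH (sizeI τ + sizeS p) (by simp [sizeS] at hsz; omega) τ p N (le_refl _) hqp hN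
    have hκ : C κ' (Tm.app M N) := hC N hN'
    refine IH (sizeI (.strict κ') + sizeS l) (by simp [sizeS, sizeI] at hsz ⊢; omega)
      (.strict κ') l (Tm.app M N) (le_refl _) hq' ?_
    intro p hp
    rw [isComp_strict_inv hp]
    exact hκ

theorem der_c {Γ : List ITy} {M : Tm} {k : STy} (h : Der Γ M k) :
    ∀ s : ℕ → Tm, (∀ (n : ℕ) (σ : ITy), Γ[n]? = some σ → ∀ m, IsComp m σ → C m (s n)) →
      C k (Tm.msubst M s) := by
  induction h with
  | @var Γ n σ m hg hcomp => intro s env; exact env n σ hg m hcomp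
  | omega Γ M => intro s env; exact C_omega _
  | @sub Γ M u v h hsub ih =>
    intro s env
    refine joint (sizeI (.strict u) + sizeS v) (.strict u) v _ (le_refl _)
      (subty_strict_iff.mp hsub) ?_
    intro p hp
    rw [isComp_strict_inv hp]
    exact ih s env
  | @lam Γ M σ μ h ih =>
    intro s env
    rw [Tm.msubst_lam, C_arrow]
    intro N hN
    have h1 : C μ (Tm.msubst M (Tm.scons N s)) := by
      refine ih (Tm.scons N s) ?_
      intro n τ hg m hcomp
      match n with
      | 0 =>
        rw [List.getElem?_cons_zero] at hg
        cases hg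
        exact hN m hcomp
      | n+1 =>
        rw [List.getElem?_cons_succ] at hg
        exact env n τ hg m hcomp
    rw [← Tm.msubst_subst] at h1
    exact (c_step μ _ _ (Tm.Hstep.hbeta _ N)).2 h1
  | @app Γ M N σ μ hM hN ihM ihN =>
    intro s env
    have h1 := ihM s env
    rw [C_arrow] at h1
    exact h1 (Tm.msubst N s) (fun m hm => ihN m hm s env)

theorem c_hn : ∀ (k : STy) (M : Tm), C k M → ¬ trivS k → Tm.HN M := by
  intro k
  induction k using sty_rec' with
  | htv n => intro M h _; exact C_tvar.mp h
  | hom => intro M _ h; exact absurd trivial h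
  | harr σ k ih =>
    intro M h hnt
    have h1 : C k (Tm.app M (Tm.var 0)) :=
      C_arrow.mp h (Tm.var 0) (fun m _ => c_vh m (Tm.VarHead.var 0))
    have h2 : Tm.HN (Tm.app M (Tm.var 0)) := ih _ h1 hnt
    rcases h2 with ⟨q, W, hp, hW⟩
    exact Tm.hn_app_inv q q (le_refl q) hp hW

/-- Typable terms of non-trivial type are head normalizing. -/
theorem der_hn {Γ : List ITy} {M : Tm} {k : STy} (h : Der Γ M k) (hnt : ¬ trivS k) :
    Tm.HN M := by
  have h1 : C k (Tm.msubst M (fun n => Tm.var n)) := by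
    refine der_c h _ ?_
    intro n σ _ m _
    exact c_vh m (Tm.VarHead.var n)
  rw [Tm.msubst_id] at h1
  exact c_hn k M h1 hnt
/-! ### The characterization lemma -/

theorem arrows_snoc (l : List ITy) (π : ITy) (t : STy) :
    arrows (l ++ [π]) t = arrows l (.arrow π t) := by
  simp [arrows, List.foldr_append]

theorem strip_zero_inv {b c : STy} (h : Strip 0 b c) : b = c := by cases h; rfl

theorem gen_applist {Γ : List ITy} {h : Tm} :
    ∀ (as : List Tm) (k : STy), Der Γ (Tm.applist h as) k → ¬ trivS k →
      ∃ πs : List ITy, Der Γ h (arrows πs k) ∧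
        List.Forall₂ (fun (π : ITy) (A : Tm) => ∀ p, IsComp p π → Der Γ A p) πs as := by
  intro as
  induction as using List.reverseRecOn with
  | nil => exact fun k hd _ => ⟨[], hd, List.Forall₂.nil⟩
  | append_singleton as a ih =>
    intro k hd hnt
    rw [Tm.applist_snoc] at hd
    rcases gen_app hd _ _ rfl with ht | ⟨σ, hA, hB⟩
    · exact absurd ht hnt
    · rcases ih (.arrow σ k) hA (by exact hnt) with ⟨πs, hh, hf⟩
      refine ⟨πs ++ [σ], ?_, ?_⟩
      · rwa [arrows_snoc]
      · exact List.rel_append hf (List.Forall₂.cons hB List.Forall₂.nil)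

theorem app_build : ∀ (ρs : List ITy) (bs : List Tm) (c : STy) {Γ : List ITy} {h : Tm},
    Der Γ h (arrows ρs c) →
    List.Forall₂ (fun (ρ : ITy) (b : Tm) => ∀ p, IsComp p ρ → Der Γ b p) ρs bs →
    Der Γ (Tm.applist h bs) c := by
  intro ρs bs c Γ h hd hf
  induction hf generalizing h with
  | nil => exact hd
  | @cons ρ b ρs' bs' hb _ ih =>
    rw [Tm.applist_cons]
    exact ih (Der.app hd hb)

/-- The key characterization: if `μ ◁ ν` (with `μ` non-trivial) then
`ν` is, up to equivalence, of the form `ρ₁ → ⋯ → ρₘ → μ`. -/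
theorem char {μ ν : STy} (h : Retract μ ν) (hnt : ¬ trivS μ) :
    ∃ (m : ℕ) (c : STy), Strip m ν c ∧ SubTy (.strict c) (.strict μ) ∧
      SubTy (.strict μ) (.strict c) := by
  obtain ⟨L, R, hL, hR, hconv⟩ := h
  -- the reduction of the body to the variable
  set F := Tm.lift L 0 with hF
  set G := Tm.lift R 0 with hG
  set B₀ := Tm.app G (Tm.var 0) with hB₀
  have hbody : Tm.Red (Tm.app F B₀) (Tm.var 0) := by
    obtain ⟨P, h1, h2⟩ := hconv
    have hP : P = Tm.iTm := Tm.red_iTm_eq h2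
    subst hP
    rcases Tm.red_lam_inv h1 with ⟨M', hM, hred⟩ | hbot
    · have : M' = Tm.var 0 := by
        have : Tm.lam (Tm.var 0) = Tm.lam M' := hM
        injection this with h'
        exact h'.symm
      rw [← this]
      exact hred
    · cases hbot
  -- typing contexts
  set Γa : List ITy := [.strict μ] with hΓa
  have hFa : Der Γa F (.arrow (.strict ν) μ) := weaken0 hL _
  have hGa : Der Γa G (.arrow (.strict μ) ν) := weaken0 hR _
  have hxa : Der Γa (Tm.var 0) μ := Der.var (by simp [hΓa]) (IsComp.strict μ)
  have hB₀a : Der Γa B₀ ν := by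
    refine Der.app hGa (fun p hp => ?_)
    rw [isComp_strict_inv hp]
    exact hxa
  have hbodyDer : Der Γa (Tm.app F B₀) μ := by
    refine Der.app hFa (fun p hp => ?_)
    rw [isComp_strict_inv hp]
    exact hB₀a
  -- head normalization of the body, and hence a head path to the variable
  have hhn : Tm.HN (Tm.app F B₀) := der_hn hbodyDer hnt
  obtain ⟨q0, W, hpW, hW⟩ := hhn
  have hWx : Tm.Red W (Tm.var 0) := by
    rcases Tm.red_confluent (Tm.hpath_red hpW) hbody with ⟨D, hD1, hD2⟩
    rw [Tm.red_var_eq hD2] at hD1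
    exact hD1
  have hWeq : W = Tm.var 0 := by
    cases hW with
    | vh hvh =>
      have h2 := Tm.varHead_red hvh hWx
      cases h2
      cases hvh
      rfl
    | lam hW' => exact absurd hWx Tm.red_lam_var
  subst hWeq
  -- apply the master lemma with M := app (lift F 0) (var 0)
  set M := Tm.app (Tm.lift F 0) (Tm.var 0) with hM
  have hMB : Tm.subst M 0 B₀ = Tm.app F B₀ := by
    show Tm.app (Tm.subst (Tm.lift F 0) 0 B₀) (Tm.subst (Tm.var 0) 0 B₀) = _
    rw [Tm.subst_lift]
    congr 1
  have hnf1 : Tm.NotFree 1 M := by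
    constructor
    · exact Tm.notFree_lift_succ F 0 0 (by omega) (Tm.notFree_lift_self L 0)
    · show (0 : ℕ) ≠ 1
      omega
  have hpath : Tm.HPathN q0 (Tm.subst M 0 B₀) (Tm.var 0) := by rwa [hMB]
  obtain ⟨as, k', _, hredM, hpB⟩ := Tm.master q0 M B₀ hpath hnf1
  -- type the spine in the extended context
  set Γ' : List ITy := .strict ν :: Γa with hΓ'
  have hF' : Der Γ' (Tm.lift F 0) (.arrow (.strict ν) μ) := weaken0 hFa _
  have hx' : Der Γ' (Tm.var 0) ν := Der.var (by simp [hΓ']) (IsComp.strict ν)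
  have hMDer : Der Γ' M μ := by
    refine Der.app hF' (fun p hp => ?_)
    rw [isComp_strict_inv hp]
    exact hx'
  have hSpine : Der Γ' (Tm.applist (Tm.var 0) as) μ := red_der hredM hMDer
  obtain ⟨πs, hvar, hargs⟩ := gen_applist as μ hSpine hnt
  -- extract the subtyping information at the variable
  have hqν : Q (.strict ν) (arrows πs μ) := by
    rcases gen_var hvar 0 rfl with ht | ⟨σ0, hg, hq⟩
    · exact absurd ((trivS_arrows πs μ).mp ht) hnt
    · have : σ0 = .strict ν := by
        simp [hΓ'] at hg
        exact hg.symm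
      rwa [this] at hq
  obtain ⟨ρs, c, hb, hsubs, hqc⟩ :=
    striple πs μ ν hqν hnt
  refine ⟨ρs.length, c, ?_, Qcomplete _ hqc, ?_⟩
  · rw [hb]; exact arrows_strip ρs c
  -- now the other direction: type the application of B₀ to the substituted arguments
  have combine : ∀ {πs₀ ρs₀ : List ITy}, List.Forall₂ SubTy πs₀ ρs₀ →
      ∀ {as₀ : List Tm},
        List.Forall₂ (fun (π : ITy) (A : Tm) => ∀ p, IsComp p π → Der Γ' A p) πs₀ as₀ →
        List.Forall₂ (fun (ρ : ITy) (b : Tm) => ∀ p, IsComp p ρ → Der Γa b p)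
          ρs₀ (as₀.map (fun A => Tm.subst A 0 B₀)) := by
    intro πs₀ ρs₀ h1
    induction h1 with
    | nil =>
      intro as₀ h2
      cases h2
      exact List.Forall₂.nil
    | @cons π ρ πs' ρs' hπρ _ ih =>
      intro as₀ h2
      cases h2 with
      | cons hA hrest =>
        refine List.Forall₂.cons ?_ (ih hrest)
        intro p hp
        refine derQ (subty_Q hπρ p hp) (fun p' hp' => ?_)
        exact subst_der (hA p' hp') [] (.strict ν) Γa B₀ rfl
          (fun p'' hp'' => by rw [isComp_strict_inv hp'']; exact hB₀a)
  have hargs' := combine hsubs hargs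
  have happl : Der Γa (Tm.applist B₀ (as.map (fun A => Tm.subst A 0 B₀))) c := by
    refine app_build ρs _ c ?_ hargs'
    rw [← hb]
    exact hB₀a
  have hfinal : Der Γa (Tm.var 0) c := red_der (Tm.hpath_red hpB) happl
  rcases gen_var hfinal 0 rfl with ht | ⟨σ0, hg, hq⟩
  · exact SubTy.trans (SubTy.toOmega _) (trivS_expand ht)
  · have : σ0 = .strict μ := by
      simp [hΓa] at hg
      exact hg.symm
    rw [this] at hq
    exact Qcomplete _ hq

/-- mutual retraction implies equivalence. -/
theorem retract_antisymm {μ ν : STy} (h₁ : Retract μ ν) (h₂ : Retract ν μ) :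
    EqvTy (.strict μ) (.strict ν) := by
  by_cases hμ : trivS μ <;> by_cases hν : trivS ν
  · exact ⟨SubTy.trans (SubTy.toOmega _) (trivS_expand hν),
      SubTy.trans (SubTy.toOmega _) (trivS_expand hμ)⟩
  · -- μ trivial, ν not: use the characterization of ν ◁ μ
    exfalso
    obtain ⟨m, c, hstrip, hc1, hc2⟩ := char h₂ hν
    have htc : trivS c := (strip_triv hstrip).mp hμ
    exact hν (trivS_iff.mpr (SubTy.trans (trivS_expand htc) hc1))
  · exfalso
    obtain ⟨m, c, hstrip, hc1, hc2⟩ := char h₁ hμ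
    have htc : trivS c := (strip_triv hstrip).mp hν
    exact hμ (trivS_iff.mpr (SubTy.trans (trivS_expand htc) hc1))
  · obtain ⟨m, c, hst1, hc1, hc2⟩ := char h₁ hμ
    obtain ⟨p, c', hst2, hd1, hd2⟩ := char h₂ hν
    have hd_eq1 : dS μ = dS c :=
      eqd c μ (subty_strict_iff.mp hc2) (subty_strict_iff.mp hc1) hμ
    have hd_eq2 : dS ν = dS c' :=
      eqd c' ν (subty_strict_iff.mp hd2) (subty_strict_iff.mp hd1) hν
    have hsd1 : dS ν = dS c + m := strip_d hst1
    have hsd2 : dS μ = dS c' + p := strip_d hst2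
    have hm0 : m = 0 := by omega
    subst hm0
    have := strip_zero_inv hst1
    subst this
    exact ⟨hc2, hc1⟩
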